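/- Sylvester's identity for complete homogeneous symmetric polynomials: for pairwise distinct real numbers x₁,…,xₙ and any integer d ≥ n−1, h_{d−n+1}(x₁,…,xₙ) = Σ_{r=1}^{n} x_r^d · ∏_{j≠r} 1/(x_r − x_j), where h_k denotes the complete homogeneous symmetric polynomial of degree k. -/

import Mathlib

open Finset

noncomputable def H : List ℝ → ℕ → ℝ
  | [], k => if k = 0 then 1 else 0
  | a :: l, k => ∑ i ∈ Finset.range (k+1), a ^ i * H l (k - i)

@[simp] lemma H_nil (k : ℕ) : H [] k = if k = 0 then 1 else 0 := rfl
lemma H_cons (a : ℝ) (l : List ℝ) (k : ℕ) :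
    H (a :: l) k = ∑ i ∈ Finset.range (k+1), a ^ i * H l (k - i) := rfl

lemma H_zero (l : List ℝ) : H l 0 = 1 := by
  induction l with
  | nil => simp
  | cons a l ih => simp [H_cons, ih]

lemma swap_aux (k : ℕ) (f : ℕ → ℕ → ℝ) :
    ∑ i ∈ Finset.range (k+1), ∑ j ∈ Finset.range (k+1-i), f i j
      = ∑ j ∈ Finset.range (k+1), ∑ i ∈ Finset.range (k+1-j), f i j := by
  have key : ∀ g : ℕ → ℕ → ℝ,
      ∑ i ∈ Finset.range (k+1), ∑ j ∈ Finset.range (k+1-i), g i j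
        = ∑ i ∈ Finset.range (k+1), ∑ j ∈ Finset.range (k+1),
            if i + j ≤ k then g i j else 0 := by
    intro g
    refine Finset.sum_congr rfl fun i hi => ?_
    rw [← Finset.sum_filter]
    refine (Finset.sum_congr ?_ fun _ _ => rfl)
    ext j
    simp only [Finset.mem_range, Finset.mem_filter]
    omega
  rw [key, key, Finset.sum_comm]
  refine Finset.sum_congr rfl fun j _ => Finset.sum_congr rfl fun i _ => ?_
  have : i + j ≤ k ↔ j + i ≤ k := by omega
  simp [this]

lemma H_swap (a b : ℝ) (l : List ℝ) (k : ℕ) :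
    H (a :: b :: l) k = H (b :: a :: l) k := by
  have expand : ∀ c e : ℝ, H (c :: e :: l) k
      = ∑ i ∈ Finset.range (k+1), ∑ j ∈ Finset.range (k+1-i),
          c ^ i * (e ^ j * H l (k - i - j)) := by
    intro c e
    rw [H_cons]
    refine Finset.sum_congr rfl fun i hi => ?_
    rw [Finset.mem_range] at hi
    rw [H_cons, Finset.mul_sum]
    have : k - i + 1 = k + 1 - i := by omega
    rw [this]
  rw [expand, expand, swap_aux]
  refine Finset.sum_congr rfl fun j _ => Finset.sum_congr rfl fun i _ => ?_
  have : k - i - j = k - j - i := by omega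
  rw [this]; ring

lemma H_perm {l l' : List ℝ} (h : l.Perm l') : ∀ k, H l k = H l' k := by
  induction h with
  | nil => intro k; rfl
  | cons a _ ih => intro k; rw [H_cons, H_cons]; exact Finset.sum_congr rfl fun i _ => by rw [ih]
  | swap a b l => intro k; exact H_swap b a l k
  | trans _ _ ih1 ih2 => intro k; rw [ih1, ih2]

lemma H_cons_succ (a : ℝ) (l : List ℝ) (k : ℕ) :
    H (a :: l) (k+1) = H l (k+1) + a * H (a :: l) k := by
  rw [H_cons, Finset.sum_range_succ']
  simp only [pow_zero, one_mul, Nat.sub_zero]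
  rw [add_comm]
  congr 1
  rw [H_cons, Finset.mul_sum]
  refine Finset.sum_congr rfl fun i hi => ?_
  have : k + 1 - (i + 1) = k - i := by omega
  rw [this, pow_succ]; ring

lemma H_diff (a b : ℝ) (l : List ℝ) (k : ℕ) :
    H (a :: l) (k+1) - H (b :: l) (k+1) = (a - b) * H (a :: b :: l) k := by
  induction k with
  | zero =>
    rw [H_cons_succ a l 0, H_cons_succ b l 0, H_zero (a :: l), H_zero (b :: l), H_zero (a :: b :: l)]
    ring
  | succ k ih =>
    rw [H_cons_succ a l (k+1), H_cons_succ b l (k+1)]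
    have hq : H (a :: b :: l) (k+1) = H (b :: l) (k+1) + a * H (a :: b :: l) k :=
      H_cons_succ a (b :: l) k
    have : H l (k + 1 + 1) + a * H (a :: l) (k + 1) - (H l (k + 1 + 1) + b * H (b :: l) (k + 1))
        = a * (H (a :: l) (k+1) - H (b :: l) (k+1)) + (a - b) * H (b :: l) (k+1) := by ring
    rw [this, ih, hq]
    ring

/-- The complete homogeneous symmetric polynomial of degree `k` in `n` real
variables: the sum of all monomials of total degree `k` (with `h_0 = 1`). -/
def completeHomogeneous (n k : ℕ) (x : Fin n → ℝ) : ℝ :=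
  ∑ d ∈ (Fintype.piFinset fun _ : Fin n => Finset.range (k+1)).filter
      (fun d => ∑ i, d i = k),
    ∏ i, x i ^ d i

lemma CH_succ (n k : ℕ) (x : Fin (n+1) → ℝ) :
    completeHomogeneous (n+1) k x
      = ∑ i ∈ Finset.range (k+1), x 0 ^ i * completeHomogeneous n (k-i) (fun j => x j.succ) := by
  unfold completeHomogeneous
  simp_rw [Finset.mul_sum]
  rw [Finset.sum_sigma']
  refine Finset.sum_nbij' (fun f => ⟨f 0, fun j => f j.succ⟩)
    (fun p => Fin.cons p.1 p.2) ?_ ?_ ?_ ?_ ?_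
  · intro f hf
    simp only [Finset.mem_filter, Fintype.mem_piFinset, Finset.mem_range] at hf
    obtain ⟨hb, hs⟩ := hf
    rw [Fin.sum_univ_succ] at hs
    have hsum : ∑ j : Fin n, f j.succ = k - f 0 := by omega
    simp only [Finset.mem_sigma, Finset.mem_range, Finset.mem_filter,
      Fintype.mem_piFinset]
    refine ⟨by omega, ⟨fun j => ?_, hsum⟩⟩
    have : f j.succ ≤ ∑ j : Fin n, f j.succ :=
      Finset.single_le_sum (f := fun j : Fin n => f j.succ) (fun _ _ => Nat.zero_le _)
        (Finset.mem_univ j)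
    omega
  · rintro ⟨i, g⟩ hp
    simp only [Finset.mem_sigma, Finset.mem_range, Finset.mem_filter,
      Fintype.mem_piFinset] at hp
    obtain ⟨hi, hg, hs⟩ := hp
    simp only [Finset.mem_filter, Fintype.mem_piFinset, Finset.mem_range]
    constructor
    · intro j
      refine Fin.cases ?_ ?_ j
      · simpa using hi
      · intro j'; simp only [Fin.cons_succ]; have := hg j'; omega
    · rw [Fin.sum_univ_succ]
      simp only [Fin.cons_zero, Fin.cons_succ]
      omega
  · intro f _; exact Fin.cons_self_tail f
  · rintro ⟨i, g⟩ _
    simp [Fin.cons_zero, Fin.cons_succ]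
  · intro f _
    rw [Fin.prod_univ_succ]

lemma CH_eq_H (n k : ℕ) (x : Fin n → ℝ) :
    completeHomogeneous n k x = H (List.ofFn x) k := by
  induction n generalizing k with
  | zero =>
    unfold completeHomogeneous
    simp only [List.ofFn_zero]
    rw [Finset.sum_filter]
    simp [H, eq_comm]
  | succ n ih =>
    rw [CH_succ, List.ofFn_succ, H_cons]
    refine Finset.sum_congr rfl fun i hi => ?_
    rw [ih]

lemma DD {n : ℕ} (x : Fin n → ℝ) (hx : Function.Injective x) (t : Finset (Fin n))
    {a b : Fin n} (ha : a ∈ t) (hb : b ∈ t) (hab : a ≠ b) (d : ℕ) :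
    (∑ r ∈ t.erase a, x r ^ d * ∏ j ∈ (t.erase a).erase r, 1 / (x r - x j))
      - (∑ r ∈ t.erase b, x r ^ d * ∏ j ∈ (t.erase b).erase r, 1 / (x r - x j))
      = (x b - x a) * ∑ r ∈ t, x r ^ d * ∏ j ∈ t.erase r, 1 / (x r - x j) := by
  have hne : ∀ {r s : Fin n}, r ≠ s → x r - x s ≠ 0 :=
    fun h => sub_ne_zero.mpr (fun e => h (hx e))
  set u : Finset (Fin n) := (t.erase a).erase b with hu
  have hbu : b ∉ u := Finset.notMem_erase _ _
  have hau : a ∉ u := fun h =>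
    Finset.notMem_erase a t (Finset.mem_of_mem_erase h)
  have h1 : t.erase a = insert b u :=
    (Finset.insert_erase (Finset.mem_erase.mpr ⟨hab.symm, hb⟩)).symm
  have h2 : t.erase b = insert a u := by
    rw [hu, Finset.erase_right_comm]
    exact (Finset.insert_erase (Finset.mem_erase.mpr ⟨hab, ha⟩)).symm
  have h3 : t = insert a (insert b u) := by
    rw [← h1, Finset.insert_erase ha]
  have hmem_u : ∀ r ∈ u, r ≠ a ∧ r ≠ b := by
    intro r hr
    rw [hu] at hr
    simp only [Finset.mem_erase] at hr
    exact ⟨hr.2.1, hr.1⟩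
  have habi : a ∉ insert b u := by
    simp only [Finset.mem_insert]
    push_neg
    exact ⟨hab, hau⟩
  -- expand the three sums
  have EA : ∑ r ∈ t.erase a, x r ^ d * ∏ j ∈ (t.erase a).erase r, 1 / (x r - x j)
      = x b ^ d * ∏ j ∈ u, 1 / (x b - x j)
        + ∑ r ∈ u, x r ^ d * ∏ j ∈ insert b (u.erase r), 1 / (x r - x j) := by
    rw [h1, Finset.sum_insert hbu]
    congr 1
    · rw [Finset.erase_insert hbu]
    · refine Finset.sum_congr rfl fun r hr => ?_
      rw [Finset.erase_insert_of_ne (hmem_u r hr).2.symm]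
  have EB : ∑ r ∈ t.erase b, x r ^ d * ∏ j ∈ (t.erase b).erase r, 1 / (x r - x j)
      = x a ^ d * ∏ j ∈ u, 1 / (x a - x j)
        + ∑ r ∈ u, x r ^ d * ∏ j ∈ insert a (u.erase r), 1 / (x r - x j) := by
    rw [h2, Finset.sum_insert hau]
    congr 1
    · rw [Finset.erase_insert hau]
    · refine Finset.sum_congr rfl fun r hr => ?_
      rw [Finset.erase_insert_of_ne (hmem_u r hr).1.symm]
  have ET : ∑ r ∈ t, x r ^ d * ∏ j ∈ t.erase r, 1 / (x r - x j)
      = x a ^ d * ∏ j ∈ insert b u, 1 / (x a - x j)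
        + (x b ^ d * ∏ j ∈ insert a u, 1 / (x b - x j)
          + ∑ r ∈ u, x r ^ d * ∏ j ∈ insert a (insert b (u.erase r)), 1 / (x r - x j)) := by
    conv_lhs => rw [h3]
    rw [Finset.sum_insert habi, Finset.sum_insert hbu]
    congr 1
    · rw [Finset.erase_insert habi]
    congr 1
    · rw [Finset.erase_insert_of_ne hab, Finset.erase_insert hbu]
    · refine Finset.sum_congr rfl fun r hr => ?_
      rw [Finset.erase_insert_of_ne (hmem_u r hr).1.symm,
        Finset.erase_insert_of_ne (hmem_u r hr).2.symm]
  rw [EA, EB, ET]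
  -- pointwise difference over u
  have key1 : ∀ r ∈ u,
      x r ^ d * ∏ j ∈ insert b (u.erase r), 1 / (x r - x j)
        - x r ^ d * ∏ j ∈ insert a (u.erase r), 1 / (x r - x j)
      = (x b - x a) * (x r ^ d * ∏ j ∈ insert a (insert b (u.erase r)), 1 / (x r - x j)) := by
    intro r hr
    obtain ⟨hra, hrb⟩ := hmem_u r hr
    have hbe : b ∉ u.erase r := fun h => hbu (Finset.mem_of_mem_erase h)
    have hae : a ∉ u.erase r := fun h => hau (Finset.mem_of_mem_erase h)
    have habe : a ∉ insert b (u.erase r) := by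
      simp only [Finset.mem_insert]; push_neg; exact ⟨hab, hae⟩
    rw [Finset.prod_insert hbe, Finset.prod_insert hae, Finset.prod_insert habe,
      Finset.prod_insert hbe]
    have h1 := hne hrb
    have h2 := hne hra
    have e : 1/(x r - x b) - 1/(x r - x a)
        = (x b - x a) * (1/(x r - x a)) * (1/(x r - x b)) := by
      field_simp
      ring_nf
    linear_combination (x r ^ d * ∏ j ∈ u.erase r, 1 / (x r - x j)) * e
  have hS : (∑ r ∈ u, x r ^ d * ∏ j ∈ insert b (u.erase r), 1 / (x r - x j))
      - (∑ r ∈ u, x r ^ d * ∏ j ∈ insert a (u.erase r), 1 / (x r - x j))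
      = (x b - x a) * ∑ r ∈ u, x r ^ d * ∏ j ∈ insert a (insert b (u.erase r)), 1 / (x r - x j) := by
    rw [← Finset.sum_sub_distrib, Finset.mul_sum]
    exact Finset.sum_congr rfl key1
  have key2 : x b ^ d * ∏ j ∈ u, 1 / (x b - x j)
      = (x b - x a) * (x b ^ d * ∏ j ∈ insert a u, 1 / (x b - x j)) := by
    rw [Finset.prod_insert hau]
    have h0 := hne (Ne.symm hab)
    field_simp
  have key3 : x a ^ d * ∏ j ∈ u, 1 / (x a - x j)
      = (x a - x b) * (x a ^ d * ∏ j ∈ insert b u, 1 / (x a - x j)) := by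
    rw [Finset.prod_insert hbu]
    have h0 := hne hab
    field_simp
  linear_combination key2 - key3 + hS

lemma MAIN {n : ℕ} (x : Fin n → ℝ) (hx : Function.Injective x) :
    ∀ m : ℕ, ∀ t : Finset (Fin n), t.card = m + 1 → ∀ d : ℕ, m ≤ d →
      H (t.toList.map x) (d - m)
        = ∑ r ∈ t, x r ^ d * ∏ j ∈ t.erase r, 1 / (x r - x j) := by
  have hne : ∀ {r s : Fin n}, r ≠ s → x r - x s ≠ 0 :=
    fun h => sub_ne_zero.mpr (fun e => h (hx e))
  intro m
  induction m with
  | zero =>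
    intro t ht d _
    obtain ⟨r, rfl⟩ := Finset.card_eq_one.mp ht
    rw [Finset.toList_singleton, List.map_singleton, Nat.sub_zero]
    rw [Finset.sum_singleton, Finset.erase_singleton, Finset.prod_empty, mul_one]
    rw [H_cons]
    rw [Finset.sum_eq_single_of_mem d (Finset.self_mem_range_succ d)]
    · rw [Nat.sub_self, H_nil, if_pos rfl, mul_one]
    · intro i hi hne'
      rw [Finset.mem_range] at hi
      rw [H_nil, if_neg (by omega), mul_zero]
  | succ m ih =>
    intro t ht d hd
    obtain ⟨a, ha, b, hb, hab⟩ := Finset.one_lt_card.mp (by omega : 1 < t.card)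
    set u : Finset (Fin n) := (t.erase a).erase b with hu
    have hbu : b ∉ u := Finset.notMem_erase _ _
    have hau : a ∉ u := fun h => Finset.notMem_erase a t (Finset.mem_of_mem_erase h)
    have h1 : t.erase a = insert b u :=
      (Finset.insert_erase (Finset.mem_erase.mpr ⟨hab.symm, hb⟩)).symm
    have h2 : t.erase b = insert a u := by
      rw [hu, Finset.erase_right_comm]
      exact (Finset.insert_erase (Finset.mem_erase.mpr ⟨hab, ha⟩)).symm
    have h3 : t = insert a (insert b u) := by
      rw [← h1, Finset.insert_erase ha]
    have habi : a ∉ insert b u := by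
      simp only [Finset.mem_insert]; push_neg; exact ⟨hab, hau⟩
    have ca : (t.erase a).card = m + 1 := by
      rw [Finset.card_erase_of_mem ha]; omega
    have cb : (t.erase b).card = m + 1 := by
      rw [Finset.card_erase_of_mem hb]; omega
    have IHa := ih (t.erase a) ca d (by omega)
    have IHb := ih (t.erase b) cb d (by omega)
    -- lists
    set L : List ℝ := u.toList.map x with hL
    have pa : H ((t.erase a).toList.map x) (d - m) = H (x b :: L) (d - m) := by
      refine H_perm ?_ (d - m)
      rw [h1]
      exact (Finset.toList_insert hbu).map x
    have pb : H ((t.erase b).toList.map x) (d - m) = H (x a :: L) (d - m) := by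
      refine H_perm ?_ (d - m)
      rw [h2]
      exact (Finset.toList_insert hau).map x
    have pt : ∀ k, H (x b :: x a :: L) k = H (t.toList.map x) k := by
      intro k
      refine H_perm ?_ k
      have p1 : (t.toList.map x).Perm (x a :: ((insert b u).toList.map x)) := by
        rw [h3]
        exact (Finset.toList_insert habi).map x
      have p2 : ((insert b u).toList.map x).Perm (x b :: L) :=
        (Finset.toList_insert hbu).map x
      exact (List.Perm.swap (x a) (x b) L).trans ((p2.cons (x a)).symm.trans p1.symm)
    have hsub : d - m = (d - (m+1)) + 1 := by omega
    have step : H (x b :: L) (d - m) - H (x a :: L) (d - m)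
        = (x b - x a) * H (t.toList.map x) (d - (m+1)) := by
      rw [hsub, H_diff (x b) (x a) L (d - (m+1)), pt]
    have dd := DD x hx t ha hb hab d
    refine mul_left_cancel₀ (hne (Ne.symm hab)) ?_
    rw [← step, ← pa, ← pb, IHa, IHb]
    exact dd

/-- Sylvester's identity for complete homogeneous symmetric polynomials:
for pairwise distinct reals `x₁,…,xₙ` and `d ≥ n - 1`,
`h_{d-n+1}(x) = ∑ r, x r ^ d * ∏_{j ≠ r} 1/(x r - x j)`. -/
theorem stmt3 (n : ℕ) (hn : 0 < n) (x : Fin n → ℝ) (hx : Function.Injective x)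
    (d : ℕ) (hd : n - 1 ≤ d) :
    completeHomogeneous n (d + 1 - n) x
      = ∑ r, x r ^ d * ∏ j ∈ univ.erase r, 1 / (x r - x j) := by
  have hcard : (univ : Finset (Fin n)).card = (n - 1) + 1 := by
    rw [Finset.card_univ, Fintype.card_fin]; omega
  have main := MAIN x hx (n-1) univ hcard d hd
  have hk : d + 1 - n = d - (n - 1) := by omega
  have hperm : (List.ofFn x).Perm (Finset.univ.toList.map x) := by
    rw [List.ofFn_eq_map]
    apply List.Perm.map
    have hm : ((univ : Finset (Fin n)).toList : Multiset (Fin n))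
        = (List.finRange n : Multiset (Fin n)) := by
      rw [Finset.coe_toList, Fin.univ_def]
    exact (Multiset.coe_eq_coe.mp hm).symm
  rw [CH_eq_H, hk, H_perm hperm (d - (n-1))]
  exact main
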